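/- Let G_k be the k-th Burling graph with probe family P_k, and let H_k be obtained from G_k by adding, for each probe P ∈ P_k, a new vertex adjacent exactly to the vertices of P. Then H_k is triangle-free and χ(H_k) > k. -/

import Mathlib

/-- Probe index type for the Burling construction: level `n` corresponds to the graph
`G_{n+1}` of the paper. A probe of level `n + 1` is given by a probe `P` of the outer
copy, a probe `Q` of the inner copy placed in `P`, and a Boolean flag (`false` = lower
probe `P ∪ Q`, `true` = upper probe `P ∪ {d_{P,Q}}`). -/
def BurlingProbeIdx : ℕ → Type
  | 0 => Unit
  | n + 1 => BurlingProbeIdx n × BurlingProbeIdx n × Bool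

/-- Vertex type of the Burling graph of level `n` (the graph `G_{n+1}` of the paper):
level `n + 1` consists of an outer copy of level `n`, an inner copy of level `n` for
each probe `P`, and a diagonal vertex `d_{P,Q}` for each probe `P` of the outer copy
and each probe `Q` of the inner copy attached to `P`. -/
def BurlingVertex : ℕ → Type
  | 0 => Unit
  | n + 1 =>
      BurlingVertex n ⊕
        (BurlingProbeIdx n × BurlingVertex n) ⊕
        (BurlingProbeIdx n × BurlingProbeIdx n)

instance instFintypeBurlingProbeIdx : ∀ n, Fintype (BurlingProbeIdx n)
  | 0 => inferInstanceAs (Fintype Unit)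
  | n + 1 =>
      letI := instFintypeBurlingProbeIdx n
      inferInstanceAs (Fintype (BurlingProbeIdx n × BurlingProbeIdx n × Bool))

instance instFintypeBurlingVertex : ∀ n, Fintype (BurlingVertex n)
  | 0 => inferInstanceAs (Fintype Unit)
  | n + 1 =>
      letI := instFintypeBurlingVertex n
      inferInstanceAs (Fintype (BurlingVertex n ⊕
        (BurlingProbeIdx n × BurlingVertex n) ⊕
        (BurlingProbeIdx n × BurlingProbeIdx n)))

/-- The set of vertices pierced by a probe in the Burling construction. -/
def burlingProbe : (n : ℕ) → BurlingProbeIdx n → Set (BurlingVertex n)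
  | 0, _ => Set.univ
  | n + 1, ⟨P, Q, b⟩ =>
      (Sum.inl '' burlingProbe n P) ∪
        (if b then {Sum.inr (Sum.inr (P, Q))}
         else (fun v => Sum.inr (Sum.inl (P, v))) '' burlingProbe n Q)

/-- One-directional adjacency relation generating the Burling graph of level `n`. -/
def burlingRel : (n : ℕ) → BurlingVertex n → BurlingVertex n → Prop
  | 0, _, _ => False
  | n + 1, x, y =>
      match x, y with
      | Sum.inl u, Sum.inl v => burlingRel n u v
      | Sum.inr (Sum.inl (P, u)), Sum.inr (Sum.inl (P', v)) => P = P' ∧ burlingRel n u v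
      | Sum.inr (Sum.inr (P, Q)), Sum.inr (Sum.inl (P', v)) => P = P' ∧ v ∈ burlingProbe n Q
      | _, _ => False

/-- The Burling graph of level `n` (the graph `G_{n+1}` of the paper). -/
def BurlingGraph (n : ℕ) : SimpleGraph (BurlingVertex n) :=
  SimpleGraph.fromRel (burlingRel n)

/-- The graph `H_k`: the Burling graph `G_k` together with, for each probe, a new apex
vertex adjacent exactly to the vertices of that probe. (Level `n` here is `H_{n+1}`.) -/
def BurlingH (n : ℕ) : SimpleGraph (BurlingVertex n ⊕ BurlingProbeIdx n) :=
  SimpleGraph.fromRel (fun x y =>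
    match x, y with
    | Sum.inl u, Sum.inl v => burlingRel n u v
    | Sum.inr i, Sum.inl v => v ∈ burlingProbe n i
    | _, _ => False)

lemma burlingProbe_indep : ∀ (n : ℕ) (P : BurlingProbeIdx n) (u v : BurlingVertex n),
    u ∈ burlingProbe n P → v ∈ burlingProbe n P → ¬ burlingRel n u v
  | 0, _, _, _, _, _, h => h
  | n + 1, ⟨P, Q, b⟩, u, v, hu, hv, h => by
    cases b <;>
      simp only [burlingProbe, if_true, if_false, Bool.false_eq_true,
        Set.mem_singleton_iff, Set.mem_union, Set.mem_image] at hu hv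
    · rcases hu with ⟨u', hu', rfl⟩ | ⟨u', hu', rfl⟩ <;>
        rcases hv with ⟨v', hv', rfl⟩ | ⟨v', hv', rfl⟩
      · exact burlingProbe_indep n _ _ _ hu' hv' h
      · exact h
      · exact h
      · exact burlingProbe_indep n _ _ _ hu' hv' h.2
    · rcases hu with ⟨u', hu', rfl⟩ | rfl <;> rcases hv with ⟨v', hv', rfl⟩ | rfl
      · exact burlingProbe_indep n _ _ _ hu' hv' h
      · exact h
      · exact h
      · exact h

lemma burling_no_triangle : ∀ (n : ℕ) (a b c : BurlingVertex n),
    (burlingRel n a b ∨ burlingRel n b a) → (burlingRel n a c ∨ burlingRel n c a) →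
    (burlingRel n b c ∨ burlingRel n c b) → False
  | 0, _, _, _, hab, _, _ => hab.elim id id
  | n + 1, a, b, c, hab, hac, hbc => by
    rcases a with a | ⟨⟨Pa, a⟩ | ⟨Pa, Qa⟩⟩ <;>
      rcases b with b | ⟨⟨Pb, b⟩ | ⟨Pb, Qb⟩⟩ <;>
      rcases c with c | ⟨⟨Pc, c⟩ | ⟨Pc, Qc⟩⟩ <;>
      simp only [burlingRel, or_false, false_or, or_self] at hab hac hbc
    · exact burling_no_triangle n a b c hab hac hbc
    · -- all inner
      refine burling_no_triangle n a b c ?_ ?_ ?_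
      · exact hab.imp And.right And.right
      · exact hac.imp And.right And.right
      · exact hbc.imp And.right And.right
    · exact hab.elim (fun h => burlingProbe_indep n Qc a b hac.2 hbc.2 h.2)
        (fun h => burlingProbe_indep n Qc b a hbc.2 hac.2 h.2)
    · exact hac.elim (fun h => burlingProbe_indep n Qb a c hab.2 hbc.2 h.2)
        (fun h => burlingProbe_indep n Qb c a hbc.2 hab.2 h.2)
    · exact hbc.elim (fun h => burlingProbe_indep n Qa b c hab.2 hac.2 h.2)
        (fun h => burlingProbe_indep n Qa c b hac.2 hab.2 h.2)

lemma burlingRel_irrefl (n : ℕ) (u : BurlingVertex n) : ¬ burlingRel n u u := fun h =>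
  burling_no_triangle n u u u (Or.inl h) (Or.inl h) (Or.inl h)

lemma burling_colors : ∀ (n : ℕ) {α : Type} (c : BurlingVertex n → α),
    (∀ u v, burlingRel n u v → c u ≠ c v) →
    ∃ P, n + 1 ≤ (c '' burlingProbe n P).ncard
  | 0, α, c, _ =>
    ⟨(), (Set.ncard_pos ((Set.toFinite _).image c)).mpr ⟨c (), (), trivial, rfl⟩⟩
  | n + 1, α, c, hc => by
    obtain ⟨P, hP⟩ := burling_colors n (fun v => c (Sum.inl v)) (fun u v h => hc _ _ h)
    obtain ⟨Q, hQ⟩ := burling_colors n (fun v => c (Sum.inr (Sum.inl (P, v))))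
      (fun u v h => hc _ _ ⟨rfl, h⟩)
    set d : BurlingVertex (n + 1) := Sum.inr (Sum.inr (P, Q)) with hd
    have hdQ : ∀ v ∈ burlingProbe n Q, c d ≠ c (Sum.inr (Sum.inl (P, v))) :=
      fun v hv => hc _ _ ⟨rfl, hv⟩
    set A := (fun v => c (Sum.inl v)) '' burlingProbe n P with hA
    set B := (fun v => c (Sum.inr (Sum.inl (P, v)))) '' burlingProbe n Q with hB
    have hAfin : A.Finite := (Set.toFinite _).image _
    have hBfin : B.Finite := (Set.toFinite _).image _
    by_cases hmem : c d ∈ A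
    · refine ⟨(P, Q, false), ?_⟩
      have himg : c '' burlingProbe (n + 1) (P, Q, false) = A ∪ B := by
        simp only [burlingProbe, Bool.false_eq_true, if_false, Set.image_union,
          Set.image_image, hA, hB]
        exact congrArg₂ (· ∪ ·) (Set.image_image _ _ _) (Set.image_image _ _ _)
      rw [himg]
      have hcd : c d ∉ B := by
        rintro ⟨v, hv, hveq⟩; exact hdQ v hv hveq.symm
      have h1 : n + 1 + 1 ≤ (insert (c d) B).ncard := by
        rw [Set.ncard_insert_of_notMem hcd hBfin]; omega
      refine h1.trans (Set.ncard_le_ncard ?_ (hAfin.union hBfin))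
      exact Set.insert_subset (Or.inl hmem) Set.subset_union_right
    · refine ⟨(P, Q, true), ?_⟩
      have himg : c '' burlingProbe (n + 1) (P, Q, true) = insert (c d) A := by
        simp only [burlingProbe, if_true, Set.image_union, Set.image_image,
          Set.image_singleton, hA, Set.union_singleton, Set.image_insert_eq]
        exact (Set.union_comm _ _).trans
          (congrArg₂ (· ∪ ·) Set.image_singleton (Set.image_image _ _ _))
      rw [himg, Set.ncard_insert_of_notMem hmem hAfin]
      omega


/-- The graph `H_k`, obtained from the Burling graph `G_k` by adding one vertex per
probe adjacent exactly to that probe, is triangle-free and has chromatic number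
greater than `k`. (Level `n` here is `H_{n+1}`, so `χ > n + 1`.) -/
theorem burlingH_triangleFree_chromatic (n : ℕ) :
    (BurlingH n).CliqueFree 3 ∧ ((n + 1 : ℕ) : ℕ∞) < (BurlingH n).chromaticNumber := by
  classical
  constructor
  · intro s hs
    rw [SimpleGraph.is3Clique_iff] at hs
    obtain ⟨x, y, z, hxy, hxz, hyz, -⟩ := hs
    rw [BurlingH, SimpleGraph.fromRel_adj] at hxy hxz hyz
    obtain ⟨hxy0, hxy⟩ := hxy; obtain ⟨hxz0, hxz⟩ := hxz; obtain ⟨hyz0, hyz⟩ := hyz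
    rcases x with x | i <;> rcases y with y | j <;> rcases z with z | k <;>
      simp only [false_or, or_false, or_self] at hxy hxz hyz
    · exact burling_no_triangle n x y z hxy hxz hyz
    · exact hxy.elim (fun h => burlingProbe_indep n k x y hxz hyz h)
        (fun h => burlingProbe_indep n k y x hyz hxz h)
    · exact hxz.elim (fun h => burlingProbe_indep n j x z hxy hyz h)
        (fun h => burlingProbe_indep n j z x hyz hxy h)
    · exact hyz.elim (fun h => burlingProbe_indep n i y z hxy hxz h)
        (fun h => burlingProbe_indep n i z y hxz hxy h)
  · by_contra hle
    rw [not_lt] at hle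
    obtain ⟨C⟩ := SimpleGraph.chromaticNumber_le_iff_colorable.mp hle
    have hprop : ∀ u v, burlingRel n u v → C (Sum.inl u) ≠ C (Sum.inl v) := by
      intro u v h hne
      have hadj : (BurlingH n).Adj (Sum.inl u) (Sum.inl v) := by
        rw [BurlingH, SimpleGraph.fromRel_adj]
        refine ⟨fun heq => burlingRel_irrefl n u ?_, Or.inl h⟩
        obtain rfl : u = v := by simpa using heq
        exact h
      exact C.valid hadj hne
    obtain ⟨P, hP⟩ := burling_colors n (fun v => C (Sum.inl v)) hprop
    have huniv : (fun v => C (Sum.inl v)) '' burlingProbe n P = Set.univ := by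
      apply Set.eq_of_subset_of_ncard_le (Set.subset_univ _)
      rw [Set.ncard_univ, Nat.card_eq_fintype_card, Fintype.card_fin]
      exact hP
    have hmem : C (Sum.inr P) ∈ (fun v => C (Sum.inl v)) '' burlingProbe n P := by
      rw [huniv]; trivial
    obtain ⟨v, hv, hveq⟩ := hmem
    have hadj : (BurlingH n).Adj (Sum.inr P) (Sum.inl v) := by
      rw [BurlingH, SimpleGraph.fromRel_adj]
      exact ⟨by simp, Or.inl hv⟩
    exact C.valid hadj hveq.symm
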